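/- Let 0 < q < p ≤ 1, n ≥ 2, and α, β ≥ 0. The second central moment of the (p,q)-Bernstein-Stancu operator is S_{n,p,q}((t - x)²; x) = [(q[n]_{p,q}[n-1]_{p,q} - [n]_{p,q}² + β²) x² + (p^{n-1}[n]_{p,q} - 2αβ) x + α²]/([n]_{p,q} + β)² for all x ∈ [0,1]. -/

import Mathlib

open Finset Filter

noncomputable def pqInt (p q : ℝ) (n : ℕ) : ℝ := ∑ i ∈ Finset.range n, p ^ (n - 1 - i) * q ^ i

noncomputable def pqFact (p q : ℝ) (n : ℕ) : ℝ := ∏ j ∈ Finset.range n, pqInt p q (j + 1)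

noncomputable def pqChoose (p q : ℝ) (n k : ℕ) : ℝ :=
  pqFact p q n / (pqFact p q k * pqFact p q (n - k))

noncomputable def pqBasis (p q : ℝ) (n k : ℕ) (x : ℝ) : ℝ :=
  (1 / p ^ (n * (n - 1) / 2)) * pqChoose p q n k * p ^ (k * (k - 1) / 2) * x ^ k *
    ∏ s ∈ Finset.range (n - k), (p ^ s - q ^ s * x)

noncomputable def S (p q α β : ℝ) (n : ℕ) (f : ℝ → ℝ) (x : ℝ) : ℝ :=
  ∑ k ∈ Finset.range (n + 1),
    pqBasis p q n k x * f ((p ^ (n - k) * pqInt p q k + α) / (pqInt p q n + β))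

lemma pqInt_zero (p q : ℝ) : pqInt p q 0 = 0 := by simp [pqInt]

lemma pqInt_one (p q : ℝ) : pqInt p q 1 = 1 := by simp [pqInt]

lemma pqInt_succ (p q : ℝ) (n : ℕ) : pqInt p q (n + 1) = p * pqInt p q n + q ^ n := by
  unfold pqInt
  rw [Finset.sum_range_succ, Finset.mul_sum]
  congr 1
  · apply Finset.sum_congr rfl
    intro i hi
    simp only [Finset.mem_range] at hi
    rw [show n + 1 - 1 - i = (n - 1 - i) + 1 by omega, pow_succ]
    ring
  · simp

lemma pqInt_succ' (p q : ℝ) (n : ℕ) : pqInt p q (n + 1) = p ^ n + q * pqInt p q n := by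
  unfold pqInt
  rw [Finset.sum_range_succ', add_comm (p ^ n), Finset.mul_sum]
  congr 1
  · apply Finset.sum_congr rfl
    intro i hi
    simp only [Finset.mem_range] at hi
    rw [show n + 1 - 1 - (i + 1) = n - 1 - i by omega, pow_succ q i]
    ring
  · simp

lemma pqInt_pos {p q : ℝ} (hq : 0 < q) (hqp : q < p) (n : ℕ) : 0 < pqInt p q (n + 1) := by
  have hp : 0 < p := hq.trans hqp
  unfold pqInt
  apply Finset.sum_pos
  · intro i _; positivity
  · exact Finset.nonempty_range_add_one

lemma pqFact_pos {p q : ℝ} (hq : 0 < q) (hqp : q < p) (n : ℕ) : 0 < pqFact p q n := by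
  unfold pqFact
  exact Finset.prod_pos fun j _ => pqInt_pos hq hqp j

lemma pqFact_succ (p q : ℝ) (n : ℕ) : pqFact p q (n + 1) = pqFact p q n * pqInt p q (n + 1) := by
  unfold pqFact; rw [Finset.prod_range_succ]

lemma pqChoose_zero {p q : ℝ} (hq : 0 < q) (hqp : q < p) (n : ℕ) : pqChoose p q n 0 = 1 := by
  unfold pqChoose
  simp only [Nat.sub_zero, pqFact, Finset.range_zero, Finset.prod_empty, one_mul]
  exact div_self (pqFact_pos hq hqp n).ne'

lemma pqChoose_self {p q : ℝ} (hq : 0 < q) (hqp : q < p) (n : ℕ) : pqChoose p q n n = 1 := by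
  unfold pqChoose
  simp only [Nat.sub_self, pqFact, Finset.range_zero, Finset.prod_empty, mul_one]
  exact div_self (pqFact_pos hq hqp n).ne'

lemma pqInt_split (p q : ℝ) {k n : ℕ} (hk : k ≤ n) :
    pqInt p q n = p ^ k * pqInt p q (n - k) + q ^ (n - k) * pqInt p q k := by
  obtain ⟨m, rfl⟩ : ∃ m, n = m + k := ⟨n - k, by omega⟩
  unfold pqInt
  rw [Finset.sum_range_add, Finset.mul_sum, Finset.mul_sum]
  simp only [Nat.add_sub_cancel]
  congr 1
  · apply Finset.sum_congr rfl
    intro i hi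
    simp only [Finset.mem_range] at hi
    rw [show m + k - 1 - i = k + (m - 1 - i) by omega, pow_add]
    ring
  · apply Finset.sum_congr rfl
    intro i hi
    simp only [Finset.mem_range] at hi
    rw [show m + k - 1 - (m + i) = k - 1 - i by omega, pow_add q m i]
    ring

lemma tri (k : ℕ) : (k + 1) * k / 2 = k * (k - 1) / 2 + k := by
  cases k with
  | zero => rfl
  | succ m =>
    obtain ⟨c, hc⟩ := Nat.even_mul_succ_self m
    have key : (m + 1 + 1) * (m + 1) = 2 * (c + (m + 1)) := by
      have h : (m + 1 + 1) * (m + 1) = m * (m + 1) + 2 * (m + 1) := by ring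
      rw [h, hc]; ring
    simp only [Nat.add_sub_cancel]
    rw [mul_comm (m + 1) m, hc, key]
    omega

lemma pqChoose_pascal {p q : ℝ} (hq : 0 < q) (hqp : q < p) {n k : ℕ} (hk : k < n) :
    pqChoose p q (n + 1) (k + 1) =
      p ^ (k + 1) * pqChoose p q n (k + 1) + q ^ (n - k) * pqChoose p q n k := by
  obtain ⟨j, rfl⟩ : ∃ j, n = k + 1 + j := ⟨n - (k + 1), by omega⟩
  have h1 : k + 1 + j + 1 - (k + 1) = j + 1 := by omega
  have h2 : k + 1 + j - (k + 1) = j := by omega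
  have h3 : k + 1 + j - k = j + 1 := by omega
  unfold pqChoose
  rw [h1, h2, h3]
  have hsplit := pqInt_split p q (show k + 1 ≤ k + 1 + j + 1 by omega)
  rw [show k + 1 + j + 1 - (k + 1) = j + 1 by omega] at hsplit
  rw [pqFact_succ p q (k + 1 + j), hsplit]
  have hfk := (pqFact_pos hq hqp (k + 1)).ne'
  have hfk' := (pqFact_pos hq hqp k).ne'
  have hfj := (pqFact_pos hq hqp (j + 1)).ne'
  have hfj' := (pqFact_pos hq hqp j).ne'
  rw [pqFact_succ p q j, pqFact_succ p q k]
  have hij := (pqInt_pos hq hqp j).ne'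
  have hik := (pqInt_pos hq hqp k).ne'
  field_simp

noncomputable def Acoef (p q x : ℝ) (n k : ℕ) : ℝ :=
  pqChoose p q n k * p ^ (k * (k - 1) / 2) * x ^ k * ∏ s ∈ Finset.range (n - k), (p ^ s - q ^ s * x)

noncomputable def Tsum (p q x : ℝ) (n : ℕ) (g : ℕ → ℝ) : ℝ :=
  ∑ k ∈ Finset.range (n + 1), Acoef p q x n k * g k

lemma Tsum_zero (p q x : ℝ) (g : ℕ → ℝ) : Tsum p q x 0 g = g 0 := by
  simp [Tsum, Acoef, pqChoose, pqFact]

lemma Acoef_zero_succ {p q : ℝ} (hq : 0 < q) (hqp : q < p) (x : ℝ) (n : ℕ) :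
    Acoef p q x (n + 1) 0 = (p ^ n - q ^ n * x) * Acoef p q x n 0 := by
  unfold Acoef
  rw [pqChoose_zero hq hqp, pqChoose_zero hq hqp]
  simp only [Nat.sub_zero, pow_zero, mul_one, one_mul]
  rw [Finset.prod_range_succ]
  ring

lemma Acoef_self_succ {p q : ℝ} (hq : 0 < q) (hqp : q < p) (x : ℝ) (n : ℕ) :
    Acoef p q x (n + 1) (n + 1) = x * p ^ n * Acoef p q x n n := by
  unfold Acoef
  rw [pqChoose_self hq hqp, pqChoose_self hq hqp]
  simp only [Nat.sub_self, Finset.range_zero, Finset.prod_empty, mul_one, one_mul,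
    Nat.add_sub_cancel]
  rw [tri n, pow_add p (n * (n - 1) / 2) n, pow_succ x n]
  ring

lemma Acoef_pascal {p q : ℝ} (hq : 0 < q) (hqp : q < p) (x : ℝ) {n k : ℕ} (hk : k < n) :
    Acoef p q x (n + 1) (k + 1) =
      (p ^ n - p ^ (k + 1) * q ^ (n - (k + 1)) * x) * Acoef p q x n (k + 1)
        + x * p ^ k * q ^ (n - k) * Acoef p q x n k := by
  unfold Acoef
  rw [pqChoose_pascal hq hqp hk]
  have e4 : (∏ s ∈ Finset.range (n - k), (p ^ s - q ^ s * x)) =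
      (∏ s ∈ Finset.range (n - (k + 1)), (p ^ s - q ^ s * x)) *
        (p ^ (n - (k + 1)) - q ^ (n - (k + 1)) * x) := by
    rw [show n - k = (n - (k + 1)) + 1 by omega, Finset.prod_range_succ]
  rw [show n + 1 - (k + 1) = n - k by omega, e4]
  simp only [Nat.add_sub_cancel]
  rw [tri k, pow_add p (k * (k - 1) / 2) k, pow_succ x k]
  have e3 : p ^ (k + 1) * (p ^ (n - (k + 1)) - q ^ (n - (k + 1)) * x) =
      p ^ n - p ^ (k + 1) * q ^ (n - (k + 1)) * x := by
    rw [mul_sub, ← pow_add, show k + 1 + (n - (k + 1)) = n by omega]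
    ring
  rw [← e3]
  ring

lemma Tsum_master {p q : ℝ} (hq : 0 < q) (hqp : q < p) (x : ℝ) (n : ℕ) (g : ℕ → ℝ) :
    Tsum p q x (n + 1) g = p ^ n * Tsum p q x n g +
      x * ∑ k ∈ Finset.range (n + 1),
        p ^ k * q ^ (n - k) * Acoef p q x n k * (g (k + 1) - g k) := by
  symm
  unfold Tsum
  rw [Finset.mul_sum, Finset.mul_sum, ← Finset.sum_add_distrib]
  have step1 : ∀ j ∈ Finset.range (n + 1),
      p ^ n * (Acoef p q x n j * g j)
        + x * (p ^ j * q ^ (n - j) * Acoef p q x n j * (g (j + 1) - g j)) =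
      (p ^ n - p ^ j * q ^ (n - j) * x) * (Acoef p q x n j * g j)
        + x * p ^ j * q ^ (n - j) * Acoef p q x n j * g (j + 1) := by
    intro j _; ring
  rw [Finset.sum_congr rfl step1, Finset.sum_add_distrib]
  rw [Finset.sum_range_succ'
    (fun j => (p ^ n - p ^ j * q ^ (n - j) * x) * (Acoef p q x n j * g j)) n]
  rw [Finset.sum_range_succ
    (fun j => x * p ^ j * q ^ (n - j) * Acoef p q x n j * g (j + 1)) n]
  rw [Finset.sum_range_succ' (fun k => Acoef p q x (n + 1) k * g k) (n + 1)]
  rw [Finset.sum_range_succ (fun k => Acoef p q x (n + 1) (k + 1) * g (k + 1)) n]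
  have mid : ∀ k ∈ Finset.range n, Acoef p q x (n + 1) (k + 1) * g (k + 1) =
      (p ^ n - p ^ (k + 1) * q ^ (n - (k + 1)) * x) * (Acoef p q x n (k + 1) * g (k + 1))
        + x * p ^ k * q ^ (n - k) * Acoef p q x n k * g (k + 1) := by
    intro k hk
    rw [Acoef_pascal hq hqp x (Finset.mem_range.mp hk)]
    ring
  rw [Finset.sum_congr rfl mid, Finset.sum_add_distrib]
  rw [Acoef_zero_succ hq hqp, Acoef_self_succ hq hqp]
  simp only [Nat.sub_self, Nat.sub_zero, pow_zero, one_mul]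
  ring

lemma pqInt_geom (p q : ℝ) (n : ℕ) : (p - q) * pqInt p q n = p ^ n - q ^ n := by
  induction n with
  | zero => simp [pqInt_zero]
  | succ m ih =>
    rw [pqInt_succ]
    linear_combination p * ih

lemma hexp (p : ℝ) (m : ℕ) : p ^ ((m + 1) * (m + 1 - 1) / 2) = p ^ m * p ^ (m * (m - 1) / 2) := by
  simp only [Nat.add_sub_cancel]
  rw [tri m, pow_add]
  ring

lemma Tsum_one {p q : ℝ} (hq : 0 < q) (hqp : q < p) (x : ℝ) (n : ℕ) :
    Tsum p q x n (fun _ => 1) = p ^ (n * (n - 1) / 2) := by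
  induction n with
  | zero => simpa using Tsum_zero p q x _
  | succ m ih =>
    rw [Tsum_master hq hqp, ih, hexp]
    have h0 : ∑ k ∈ Finset.range (m + 1),
        p ^ k * q ^ (m - k) * Acoef p q x m k * ((1:ℝ) - 1) = 0 := by simp
    rw [h0, mul_zero, add_zero]

lemma Tsum_const {p q : ℝ} (hq : 0 < q) (hqp : q < p) (x : ℝ) (n : ℕ) (c : ℝ) :
    Tsum p q x n (fun _ => c) = c * p ^ (n * (n - 1) / 2) := by
  have h : Tsum p q x n (fun _ => c) = c * Tsum p q x n (fun _ => 1) := by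
    unfold Tsum
    rw [Finset.mul_sum]
    exact Finset.sum_congr rfl fun k _ => by ring
  rw [h, Tsum_one hq hqp]

lemma Tsum_geo {p q : ℝ} (hq : 0 < q) (hqp : q < p) (x : ℝ) (n : ℕ) :
    Tsum p q x n (fun k => (q / p) ^ k) =
      p ^ (n * (n - 1) / 2) * (1 - x + x * (q / p) ^ n) := by
  have hp : (0:ℝ) < p := hq.trans hqp
  induction n with
  | zero => simp [Tsum_zero]
  | succ m ih =>
    rw [Tsum_master hq hqp, ih, hexp]
    have hcorr : (∑ k ∈ Finset.range (m + 1), p ^ k * q ^ (m - k) * Acoef p q x m k *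
        ((q / p) ^ (k + 1) - (q / p) ^ k)) = q ^ m * (q - p) / p * p ^ (m * (m - 1) / 2) := by
      rw [← Tsum_const hq hqp x m (q ^ m * (q - p) / p)]
      unfold Tsum
      apply Finset.sum_congr rfl
      intro k hk
      have hk' : k ≤ m := Nat.lt_succ_iff.mp (Finset.mem_range.mp hk)
      obtain ⟨j, rfl⟩ : ∃ j, m = k + j := ⟨m - k, by omega⟩
      simp only [Nat.add_sub_cancel_left]
      rw [div_pow, div_pow]
      field_simp
      ring
    rw [hcorr, div_pow, div_pow]
    field_simp
    ring

lemma Tsum_w {p q : ℝ} (hq : 0 < q) (hqp : q < p) (x : ℝ) (n : ℕ) :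
    Tsum p q x n (fun k => pqInt p q k / p ^ k) =
      p ^ (n * (n - 1) / 2) * x * pqInt p q n / p ^ n := by
  have hp : (0:ℝ) < p := hq.trans hqp
  induction n with
  | zero => simp [Tsum_zero, pqInt_zero]
  | succ m ih =>
    rw [Tsum_master hq hqp, ih, hexp]
    have hcorr : (∑ k ∈ Finset.range (m + 1), p ^ k * q ^ (m - k) * Acoef p q x m k *
        (pqInt p q (k + 1) / p ^ (k + 1) - pqInt p q k / p ^ k)) =
        q ^ m / p * p ^ (m * (m - 1) / 2) := by
      rw [← Tsum_const hq hqp x m (q ^ m / p)]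
      unfold Tsum
      apply Finset.sum_congr rfl
      intro k hk
      have hk' : k ≤ m := Nat.lt_succ_iff.mp (Finset.mem_range.mp hk)
      obtain ⟨j, rfl⟩ : ∃ j, m = k + j := ⟨m - k, by omega⟩
      simp only [Nat.add_sub_cancel_left]
      rw [pqInt_succ]
      field_simp
      ring
    rw [hcorr, pqInt_succ]
    field_simp
    ring

lemma Tsum_v {p q : ℝ} (hq : 0 < q) (hqp : q < p) (x : ℝ) (n : ℕ) :
    Tsum p q x (n + 1) (fun k => (pqInt p q k / p ^ k) ^ 2) =
      p ^ ((n + 1) * n / 2) * x *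
        (p ^ n * pqInt p q (n + 1) + q * pqInt p q (n + 1) * pqInt p q n * x) /
          p ^ (2 * (n + 1)) := by
  have hp : (0:ℝ) < p := hq.trans hqp
  induction n with
  | zero =>
    simp only [Tsum, Finset.sum_range_succ, Finset.sum_range_one, Acoef,
      pqChoose_zero hq hqp, pqChoose_self hq hqp, pqInt_zero, pqInt_one]
    norm_num
    rw [pqInt_one]
    field_simp
  | succ m ih =>
    rw [Tsum_master hq hqp, ih]
    have hcorr : (∑ k ∈ Finset.range (m + 1 + 1), p ^ k * q ^ (m + 1 - k) * Acoef p q x (m + 1) k *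
        ((pqInt p q (k + 1) / p ^ (k + 1)) ^ 2 - (pqInt p q k / p ^ k) ^ 2)) =
        Tsum p q x (m + 1) (fun k =>
          q ^ (m + 1) / p ^ 2 * (q / p) ^ k + 2 * q ^ (m + 1) / p * (pqInt p q k / p ^ k)) := by
      unfold Tsum
      apply Finset.sum_congr rfl
      intro k hk
      have hk' : k ≤ m + 1 := Nat.lt_succ_iff.mp (Finset.mem_range.mp hk)
      obtain ⟨j, hj⟩ : ∃ j, m + 1 = k + j := ⟨m + 1 - k, by omega⟩
      rw [hj, Nat.add_sub_cancel_left, pqInt_succ, div_pow]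
      simp only [div_pow]
      field_simp
      ring
    rw [hcorr]
    have hsplit : Tsum p q x (m + 1) (fun k =>
        q ^ (m + 1) / p ^ 2 * (q / p) ^ k + 2 * q ^ (m + 1) / p * (pqInt p q k / p ^ k)) =
        q ^ (m + 1) / p ^ 2 * Tsum p q x (m + 1) (fun k => (q / p) ^ k) +
          2 * q ^ (m + 1) / p * Tsum p q x (m + 1) (fun k => pqInt p q k / p ^ k) := by
      unfold Tsum
      rw [Finset.mul_sum, Finset.mul_sum, ← Finset.sum_add_distrib]
      exact Finset.sum_congr rfl fun k _ => by ring
    rw [hsplit, Tsum_geo hq hqp, Tsum_w hq hqp]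
    simp only [Nat.add_sub_cancel]
    have e1 : p ^ ((m + 1 + 1) * (m + 1) / 2) = p ^ (m * (m - 1) / 2) * p ^ m * p ^ (m + 1) := by
      rw [show (m + 1 + 1) * (m + 1) / 2 = m * (m - 1) / 2 + m + (m + 1) by
        rw [tri (m + 1)]
        simp only [Nat.add_sub_cancel]
        rw [tri m]]
      rw [pow_add, pow_add]
    have e2 : p ^ ((m + 1) * m / 2) = p ^ (m * (m - 1) / 2) * p ^ m := by
      rw [tri m, pow_add]
    rw [e1, e2, pqInt_succ p q (m + 1), div_pow]
    have hI : pqInt p q (m + 1) = p * pqInt p q m + q ^ m := pqInt_succ p q m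
    have hGm : (p - q) * pqInt p q m = p ^ m - q ^ m := pqInt_geom p q m
    field_simp
    linear_combination
      (x ^ 2 * (p ^ (m + 1)) ^ 2 * p ^ (2 * (m + 1 + 1)) *
        (q ^ (m + 1) * (p - q) - q * p * pqInt p q (m + 1))) * hI +
      (x ^ 2 * (p ^ (m + 1)) ^ 2 * p ^ (2 * (m + 1 + 1)) * q ^ (m + 1) * p) * hGm

theorem S_second_central_moment (p q α β : ℝ) (hq : 0 < q) (hqp : q < p) (hp : p ≤ 1)
    (hα : 0 ≤ α) (hβ : 0 ≤ β) (n : ℕ) (hn : 2 ≤ n)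
    (x : ℝ) (hx : x ∈ Set.Icc (0 : ℝ) 1) :
    S p q α β n (fun t => (t - x) ^ 2) x =
      ((q * pqInt p q n * pqInt p q (n - 1) - pqInt p q n ^ 2 + β ^ 2) * x ^ 2 +
        (p ^ (n - 1) * pqInt p q n - 2 * α * β) * x + α ^ 2) / (pqInt p q n + β) ^ 2 := by
  have hp0 : (0:ℝ) < p := hq.trans hqp
  obtain ⟨m, rfl⟩ : ∃ m, n = m + 2 := ⟨n - 2, by omega⟩
  have hDpos : 0 < pqInt p q (m + 2) + β := by
    have := pqInt_pos hq hqp (m + 1)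
    linarith
  have hDne : pqInt p q (m + 2) + β ≠ 0 := hDpos.ne'
  set E := (m + 2) * (m + 2 - 1) / 2 with hE
  set D := pqInt p q (m + 2) + β with hDdef
  have key : S p q α β (m + 2) (fun t => (t - x) ^ 2) x =
      1 / p ^ E *
        ((p ^ (m + 2)) ^ 2 / D ^ 2 * Tsum p q x (m + 2) (fun k => (pqInt p q k / p ^ k) ^ 2) +
          2 * p ^ (m + 2) * (α - x * D) / D ^ 2 *
            Tsum p q x (m + 2) (fun k => pqInt p q k / p ^ k) +
          (α - x * D) ^ 2 / D ^ 2 * Tsum p q x (m + 2) (fun _ => 1)) := by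
    unfold S Tsum
    rw [Finset.mul_sum, Finset.mul_sum, Finset.mul_sum, ← Finset.sum_add_distrib,
      ← Finset.sum_add_distrib, Finset.mul_sum]
    apply Finset.sum_congr rfl
    intro k hk
    have hk' : k ≤ m + 2 := Nat.lt_succ_iff.mp (Finset.mem_range.mp hk)
    have hbasis : pqBasis p q (m + 2) k x = 1 / p ^ E * Acoef p q x (m + 2) k := by
      unfold pqBasis Acoef
      rw [hE]
      ring
    rw [hbasis]
    have hpnk : p ^ (m + 2 - k) = p ^ (m + 2) / p ^ k := pow_sub₀ p hp0.ne' hk'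
    rw [hpnk]
    have hpk : (p:ℝ) ^ k ≠ 0 := pow_ne_zero _ hp0.ne'
    rw [← hDdef]
    field_simp
    ring
  rw [key, Tsum_w hq hqp, Tsum_one hq hqp]
  have hv := Tsum_v hq hqp x (m + 1)
  simp only [show m + 1 + 1 = m + 2 from rfl] at hv
  rw [hv]
  simp only [show m + 2 - 1 = m + 1 from rfl]
  have hEe : E = (m + 2) * (m + 1) / 2 := rfl
  have hpE : (p:ℝ) ^ E ≠ 0 := pow_ne_zero _ hp0.ne'
  have hpn : (p:ℝ) ^ (m + 2) ≠ 0 := pow_ne_zero _ hp0.ne'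
  rw [show (m + 2) * (m + 1) / 2 = E by rw [hEe]]
  field_simp
  ring
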